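/- Let u : [0,1] → ℝ be non-increasing with ∫₀¹ u(x) dx = 0, and let φ(t) = 1 − log 2 − log(1 − t) for t ∈ [0, 1/2]. Then ∫₀^{1/2} u(x) φ(x) dx ≥ 0. -/

import Mathlib

open MeasureTheory Real Set

noncomputable section

/-- key step in the proof of Lemma 3.8. Let `u : [0,1] → ℝ` be
non-increasing with `∫₀¹ u = 0` and let `φ(t) = 1 - log 2 - log(1-t)`. Then
`∫₀^{1/2} u(x) φ(x) dx ≥ 0`. -/
theorem statement15 (u : ℝ → ℝ) (hu : AntitoneOn u (Set.Icc 0 1))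
    (hint : ∫ x in (0:ℝ)..1, u x = 0) :
    0 ≤ ∫ x in (0:ℝ)..(1/2), u x * (1 - Real.log 2 - Real.log (1 - x)) := by
  have hlog2 : Real.log 2 < 1 := by
    have := Real.log_two_lt_d9; linarith
  have hφ0 : (0:ℝ) < 1 - Real.log 2 := by linarith
  set c := u (1/2) with hc
  -- integrability of u on subintervals
  have hu1 : IntervalIntegrable u volume 0 (1/2) := by
    apply AntitoneOn.intervalIntegrable
    apply hu.mono
    rw [Set.uIcc_of_le (by norm_num : (0:ℝ) ≤ 1/2)]
    exact Set.Icc_subset_Icc le_rfl (by norm_num)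
  have hu2 : IntervalIntegrable u volume (1/2) 1 := by
    apply AntitoneOn.intervalIntegrable
    apply hu.mono
    rw [Set.uIcc_of_le (by norm_num : (1:ℝ)/2 ≤ 1)]
    exact Set.Icc_subset_Icc (by norm_num) le_rfl
  -- continuity of the log part on [0,1/2]
  have hcont : ContinuousOn (fun x : ℝ => -Real.log (1 - x)) (Set.uIcc 0 (1/2)) := by
    rw [Set.uIcc_of_le (by norm_num : (0:ℝ) ≤ 1/2)]
    apply ContinuousOn.neg
    apply ContinuousOn.log
    · exact (continuousOn_const.sub continuousOn_id)
    · intro x hx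
      have := hx.2
      intro h
      have : x = 1 := by linarith
      linarith [hx.2]
  have hug : IntervalIntegrable (fun x => u x * -Real.log (1 - x)) volume 0 (1/2) :=
    hu1.mul_continuousOn hcont
  have hcg : IntervalIntegrable (fun x => c * -Real.log (1 - x)) volume 0 (1/2) :=
    (intervalIntegrable_const).mul_continuousOn hcont
  -- U := ∫₀^{1/2} u
  set U := ∫ x in (0:ℝ)..(1/2), u x with hU
  -- ∫_{1/2}^1 u = -U
  have hsplit : U + ∫ x in (1/2:ℝ)..1, u x = 0 := by
    rw [hU, intervalIntegral.integral_add_adjacent_intervals hu1 hu2]; exact hint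
  -- ∫_{1/2}^1 u ≤ c/2
  have hle : (∫ x in (1/2:ℝ)..1, u x) ≤ c / 2 := by
    have : (∫ x in (1/2:ℝ)..1, u x) ≤ ∫ x in (1/2:ℝ)..1, c := by
      apply intervalIntegral.integral_mono_on (by norm_num) hu2 intervalIntegrable_const
      intro x hx
      exact hu (Set.mem_Icc.mpr ⟨by norm_num, by linarith [hx.2]⟩)
        (Set.mem_Icc.mpr ⟨by linarith [hx.1], hx.2⟩) hx.1
    simpa using this.trans_eq (by simp; ring)
  -- hence U ≥ -c/2
  have hUc : -c / 2 ≤ U := by linarith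
  -- ∫₀^{1/2} -log(1-x) = (1 - log 2)/2
  have hintlog : (∫ x in (0:ℝ)..(1/2), -Real.log (1 - x)) = (1 - Real.log 2) / 2 := by
    have h1 : (∫ x in (0:ℝ)..(1/2), Real.log (1 - x))
        = ∫ x in (1/2:ℝ)..1, Real.log x := by
      rw [intervalIntegral.integral_comp_sub_left (fun x => Real.log x) 1]
      norm_num
    rw [intervalIntegral.integral_neg, h1, integral_log]
    have : Real.log (1/2) = -Real.log 2 := by
      rw [Real.log_div one_ne_zero (by norm_num)]; simp
    rw [this]
    simp
    ring
  -- lower bound ∫ u * -log(1-x) ≥ c * (1 - log 2)/2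
  have hlb : c * ((1 - Real.log 2) / 2) ≤ ∫ x in (0:ℝ)..(1/2), u x * -Real.log (1 - x) := by
    have : (∫ x in (0:ℝ)..(1/2), c * -Real.log (1 - x))
        ≤ ∫ x in (0:ℝ)..(1/2), u x * -Real.log (1 - x) := by
      apply intervalIntegral.integral_mono_on (by norm_num) hcg hug
      intro x hx
      have hxmem : x ∈ Set.Icc (0:ℝ) 1 := ⟨hx.1, by linarith [hx.2]⟩
      have huc : c ≤ u x := hu hxmem (Set.mem_Icc.mpr ⟨by norm_num, by norm_num⟩) hx.2
      have hg : 0 ≤ -Real.log (1 - x) := by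
        rw [neg_nonneg]
        apply Real.log_nonpos
        · linarith [hx.2]
        · linarith [hx.1]
      exact mul_le_mul_of_nonneg_right huc hg
    calc c * ((1 - Real.log 2) / 2)
        = ∫ x in (0:ℝ)..(1/2), c * -Real.log (1 - x) := by
          rw [intervalIntegral.integral_const_mul, hintlog]
      _ ≤ _ := this
  -- put it together
  have hsplit2 : (∫ x in (0:ℝ)..(1/2), u x * (1 - Real.log 2 - Real.log (1 - x)))
      = (1 - Real.log 2) * U + ∫ x in (0:ℝ)..(1/2), u x * -Real.log (1 - x) := by
    rw [hU, ← intervalIntegral.integral_const_mul, ← intervalIntegral.integral_add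
      (hu1.const_mul _) hug]
    apply intervalIntegral.integral_congr
    intro x _
    ring
  rw [hsplit2]
  nlinarith [hlb, hUc, hφ0]

end
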